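/- If there exists an upcycle for A^n with diamondicity d and a = |A|, then n divides d·a^{n−d−1}. In particular, if gcd(d,n) = 1 then n divides a^{n−d−1}. -/

import Mathlib

open Finset

lemma shift_sum (N : ℕ) (g : ℕ → ℕ) (hg : ∀ s, g (s + N) = g s) :
    ∀ j, ∑ s ∈ range N, g (s + j) = ∑ s ∈ range N, g s := by
  have key : ∀ (h : ℕ → ℕ), (∀ s, h (s + N) = h s) →
      ∑ s ∈ range N, h (s + 1) = ∑ s ∈ range N, h s := by
    intro h hp
    have h1 := Finset.sum_range_succ' h N
    have h2 := Finset.sum_range_succ h N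
    have h3 : h N = h 0 := by simpa using hp 0
    omega
  intro j
  induction j with
  | zero => simp
  | succ j ih =>
    have h1 : ∑ s ∈ range N, g (s + (j + 1)) = ∑ s ∈ range N, (fun t => g (t + j)) (s + 1) := by
      apply sum_congr rfl; intro s _; simp only []; ring_nf
    rw [h1, key (fun t => g (t + j)) (fun s => by show g (s + N + j) = g (s + j); rw [add_right_comm]; exact hg (s + j))]
    exact ih


/-- The window of length `n` of the cyclic partial word `u` starting at position `i`
covers the total word `w`. -/
def Covers (a n : ℕ) (u : ℕ → Option (Fin a)) (i : ℕ) (w : Fin n → Fin a) : Prop :=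
  ∀ j : Fin n, u (i + (j : ℕ)) = none ∨ u (i + (j : ℕ)) = some (w j)

/-- `u`, viewed as a cyclic partial word of length `N`, is a universal partial cycle
for `(Fin a)^n`. -/
def IsUpcycle (a n N : ℕ) (u : ℕ → Option (Fin a)) : Prop :=
  (∀ i, u (i + N) = u i) ∧ ∀ w : Fin n → Fin a, ∃! i : Fin N, Covers a n u (i : ℕ) w

/-- If there exists an upcycle for `(Fin a)^n` with diamondicity `d`, then
`n ∣ d · a^(n-d-1)`; in particular if `gcd(d, n) = 1` then `n ∣ a^(n-d-1)`. -/
theorem upcycle_divisibility (a n d : ℕ) (ha : 2 ≤ a) (hn : 0 < n) (hd : d ≤ n)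
    (u : ℕ → Option (Fin a))
    (hu : IsUpcycle a n (a ^ (n - d)) u)
    (hdiam : ∀ i, ((Finset.range n).filter (fun j => u (i + j) = none)).card = d) :
    n ∣ d * a ^ (n - d - 1) ∧ (Nat.gcd d n = 1 → n ∣ a ^ (n - d - 1)) := by
  classical
  suffices main : n ∣ d * a ^ (n - d - 1) by
    refine ⟨main, fun hgcd => ?_⟩
    have hco : Nat.Coprime n d := Nat.coprime_comm.mp hgcd
    exact hco.dvd_of_dvd_mul_left main
  rcases eq_or_lt_of_le hd with hdn | hdn
  · subst hdn; simp
  rcases Nat.eq_zero_or_pos d with hd0 | hd0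
  · simp [hd0]
  have ha0 : 0 < a := by omega
  obtain ⟨hper, hcov⟩ := hu
  set N := a ^ (n - d) with hN
  set c : Fin a := ⟨0, by omega⟩ with hc
  set t : ℕ → Finset (Fin a) := fun p => (u p).elim Finset.univ (fun v => ({v} : Finset (Fin a))) with ht
  have hmem : ∀ (s : ℕ) (w : Fin n → Fin a),
      (∀ j : Fin n, w j ∈ t (s + (j : ℕ))) ↔ Covers a n u s w := by
    intro s w
    unfold Covers
    apply forall_congr'
    intro j
    rcases hcase : u (s + (j : ℕ)) with _ | v
    · simp [ht, hcase]
    · simp [ht, hcase, eq_comm]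
  have hdiamF : ∀ s : ℕ, (univ.filter (fun j : Fin n => u (s + (j : ℕ)) = none)).card = d := by
    intro s
    have h1 := hdiam s
    rw [Finset.card_filter] at h1 ⊢
    rw [Fin.sum_univ_eq_sum_range (fun j => if u (s + j) = none then 1 else 0) n]
    exact h1
  have hprod : ∀ s : ℕ, ∏ j : Fin n, (t (s + (j : ℕ))).card = a ^ d := by
    intro s
    have hterm : ∀ j : Fin n, (t (s + (j : ℕ))).card = if u (s + (j : ℕ)) = none then a else 1 := by
      intro j
      rcases hcase : u (s + (j : ℕ)) with _ | v <;> simp [ht, hcase]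
    rw [Finset.prod_congr rfl (fun j _ => hterm j)]
    rw [Finset.prod_ite, Finset.prod_const, Finset.prod_const_one, mul_one, hdiamF s]
  have hcount : ∀ (s : ℕ) (j : Fin n),
      ((Fintype.piFinset (fun i : Fin n => t (s + (i : ℕ)))).filter (fun w => w j = c)).card
        = (if u (s + (j : ℕ)) = none then a ^ (d - 1)
           else if u (s + (j : ℕ)) = some c then a ^ d else 0) := by
    intro s j
    have hfe : (Fintype.piFinset (fun i : Fin n => t (s + (i : ℕ)))).filter (fun w => w j = c)
        = Fintype.piFinset (fun i : Fin n =>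
            if i = j then t (s + (i : ℕ)) ∩ {c} else t (s + (i : ℕ))) := by
      ext w
      simp only [mem_filter, Fintype.mem_piFinset]
      constructor
      · rintro ⟨h1, h2⟩ i
        by_cases hij : i = j
        · subst hij; rw [if_pos rfl]; exact mem_inter.mpr ⟨h1 i, mem_singleton.mpr h2⟩
        · rw [if_neg hij]; exact h1 i
      · intro h
        refine ⟨fun i => ?_, ?_⟩
        · have hi := h i
          by_cases hij : i = j
          · subst hij; rw [if_pos rfl] at hi; exact (mem_inter.mp hi).1
          · rw [if_neg hij] at hi; exact hi
        · have hj := h j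
          rw [if_pos rfl] at hj
          exact mem_singleton.mp (mem_inter.mp hj).2
    rw [hfe, Fintype.card_piFinset, ← Finset.mul_prod_erase univ _ (mem_univ j)]
    have herase : ∏ i ∈ univ.erase j,
        ((if i = j then t (s + (i : ℕ)) ∩ {c} else t (s + (i : ℕ)))).card
        = ∏ i ∈ univ.erase j, (t (s + (i : ℕ))).card := by
      apply prod_congr rfl
      intro i hi
      rw [if_neg (Finset.ne_of_mem_erase hi)]
    rw [herase, if_pos rfl]
    have hre : (t (s + (j : ℕ))).card * ∏ i ∈ univ.erase j, (t (s + (i : ℕ))).card = a ^ d :=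
      (Finset.mul_prod_erase univ (fun i : Fin n => (t (s + (i : ℕ))).card)
        (mem_univ j)).trans (hprod s)
    rcases hcase : u (s + (j : ℕ)) with _ | v
    · have hd1 : 1 ≤ d := by
        have hjm : j ∈ univ.filter (fun i : Fin n => u (s + (i : ℕ)) = none) := by
          simp [hcase]
        have := Finset.card_pos.mpr ⟨j, hjm⟩
        rw [hdiamF s] at this; exact this
      have hcardt : (t (s + (j : ℕ))).card = a := by simp [ht, hcase]
      rw [hcardt] at hre
      have hps : a ^ d = a * a ^ (d - 1) := by
        rw [← pow_succ']; congr 1; omega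
      have hpe : ∏ i ∈ univ.erase j, (t (s + (i : ℕ))).card = a ^ (d - 1) :=
        Nat.eq_of_mul_eq_mul_left ha0 (hre.trans hps)
    
      rw [hpe]
      simp [ht, hcase]
    · have hcardt : (t (s + (j : ℕ))).card = 1 := by simp [ht, hcase]
      rw [hcardt, one_mul] at hre
      rw [hre]
      by_cases hvc : v = c
      · subst hvc; simp [ht, hcase]
      · have : t (s + (j : ℕ)) ∩ {c} = ∅ := by
          rw [ht]; simp [hcase, Finset.singleton_inter_of_notMem, hvc]
        rw [this]
        simp [hcase, hvc]
  set F : (Fin n → Fin a) → ℕ := fun w => ∑ j : Fin n, if w j = c then 1 else 0 with hF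
  have hEq1 : ∑ w : Fin n → Fin a, F w = n * a ^ (n - 1) := by
    simp only [hF]
    rw [Finset.sum_comm]
    have hj : ∀ j : Fin n,
        ∑ w : Fin n → Fin a, (if w j = c then (1 : ℕ) else 0) = a ^ (n - 1) := by
      intro j
      rw [← Finset.card_filter]
      have hiff : (univ.filter (fun w : Fin n → Fin a => w j = c))
          = Fintype.piFinset (fun i : Fin n => if i = j then ({c} : Finset (Fin a)) else univ) := by
        ext w
        simp only [mem_filter, mem_univ, true_and, Fintype.mem_piFinset]
        constructor
        · intro h i
          by_cases hij : i = j
          · subst hij; simpa using h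
          · simp [hij]
        · intro h; have := h j; simpa using this
      rw [hiff, Fintype.card_piFinset, ← Finset.mul_prod_erase univ _ (mem_univ j), if_pos rfl]
      have hrest : ∏ i ∈ univ.erase j,
          ((if i = j then ({c} : Finset (Fin a)) else univ)).card = ∏ _i ∈ univ.erase j, a := by
        apply prod_congr rfl; intro i hi
        rw [if_neg (Finset.ne_of_mem_erase hi)]
        simp
      rw [hrest, Finset.prod_const, Finset.card_singleton, one_mul,
          Finset.card_erase_of_mem (mem_univ j), Finset.card_univ, Fintype.card_fin]
    rw [Finset.sum_congr rfl (fun j _ => hj j), Finset.sum_const, Finset.card_univ,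
        Fintype.card_fin, smul_eq_mul]
  have hEq2 : ∑ w : Fin n → Fin a, F w
      = ∑ s : Fin N, ∑ w ∈ univ.filter (fun w : Fin n → Fin a => (hcov w).choose = s), F w :=
    (Finset.sum_fiberwise univ (fun w => (hcov w).choose) F).symm
  have hfiber : ∀ s : Fin N, (univ.filter (fun w : Fin n → Fin a => (hcov w).choose = s))
      = Fintype.piFinset (fun j : Fin n => t ((s : ℕ) + (j : ℕ))) := by
    intro s
    ext w
    simp only [mem_filter, mem_univ, true_and, Fintype.mem_piFinset]
    rw [show (∀ j : Fin n, w j ∈ t ((s : ℕ) + (j : ℕ))) ↔ Covers a n u (s : ℕ) w from hmem s w]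
    constructor
    · rintro rfl; exact (hcov w).choose_spec.1
    · intro h; exact ((hcov w).choose_spec.2 s h).symm
  set k : ℕ → ℕ := fun s => ∑ j : Fin n, if u (s + (j : ℕ)) = some c then 1 else 0 with hk
  have hWin : ∀ s : ℕ, ∑ w ∈ Fintype.piFinset (fun i : Fin n => t (s + (i : ℕ))), F w
      = d * a ^ (d - 1) + a ^ d * k s := by
    intro s
    simp only [hF]
    rw [Finset.sum_comm]
    have hj : ∀ j : Fin n,
        ∑ w ∈ Fintype.piFinset (fun i : Fin n => t (s + (i : ℕ))), (if w j = c then (1 : ℕ) else 0)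
        = (if u (s + (j : ℕ)) = none then a ^ (d - 1) else 0)
          + (if u (s + (j : ℕ)) = some c then a ^ d else 0) := by
      intro j
      rw [← Finset.card_filter, hcount s j]
      rcases hcase : u (s + (j : ℕ)) with _ | v
      · simp
      · by_cases hvc : v = c <;> simp [hvc]
    rw [Finset.sum_congr rfl (fun j _ => hj j), Finset.sum_add_distrib]
    congr 1
    · rw [← Finset.sum_filter, Finset.sum_const, smul_eq_mul, hdiamF s]
    · rw [hk, Finset.mul_sum]
      apply sum_congr rfl
      intro j _
      by_cases h : u (s + (j : ℕ)) = some c <;> simp [h]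
  set m := ∑ p ∈ range N, (if u p = some c then (1 : ℕ) else 0) with hm
  have hK : ∑ s : Fin N, k (s : ℕ) = n * m := by
    rw [Fin.sum_univ_eq_sum_range (fun s => k s) N]
    simp only [hk]
    have hinner : ∀ s : ℕ, ∑ j : Fin n, (if u (s + (j : ℕ)) = some c then (1 : ℕ) else 0)
        = ∑ j ∈ range n, (if u (s + j) = some c then 1 else 0) :=
      fun s => Fin.sum_univ_eq_sum_range (fun p => if u (s + p) = some c then (1 : ℕ) else 0) n
    rw [Finset.sum_congr rfl fun s _ => hinner s, Finset.sum_comm]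
    have hper' : ∀ p, (if u (p + N) = some c then (1 : ℕ) else 0)
        = (if u p = some c then 1 else 0) := by intro p; rw [hper p]
    rw [Finset.sum_congr rfl (fun j _ =>
      shift_sum N (fun p => if u p = some c then 1 else 0) hper' j)]
    rw [Finset.sum_const, smul_eq_mul, card_range, hm]
  have hGrand : n * a ^ (n - 1) = N * (d * a ^ (d - 1)) + a ^ d * (n * m) := by
    rw [← hEq1, hEq2]
    rw [Finset.sum_congr rfl (fun s _ => by rw [hfiber s, hWin (s : ℕ)])]
    rw [Finset.sum_add_distrib, Finset.sum_const, Finset.card_univ, Fintype.card_fin, smul_eq_mul]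
    congr 1
    rw [← Finset.mul_sum, hK]
  have hpow : a ^ (n - 1) = a ^ (n - d - 1) * a ^ d := by
    rw [← pow_add]; congr 1; omega
  have hNe : N * (d * a ^ (d - 1)) = d * a ^ (n - 1) := by
    have hpp : a ^ (n - d) * a ^ (d - 1) = a ^ (n - 1) := by
      rw [← pow_add]; congr 1; omega
    rw [hN, mul_left_comm, hpp]
  have hsub : (n - d) * a ^ (n - 1) = a ^ d * (n * m) := by
    have h1 : n * a ^ (n - 1) = d * a ^ (n - 1) + a ^ d * (n * m) := by rw [hGrand, hNe]
    rw [Nat.sub_mul, h1, Nat.add_sub_cancel_left]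
  have hcancel : (n - d) * a ^ (n - d - 1) = n * m := by
    have h2 : ((n - d) * a ^ (n - d - 1)) * a ^ d = (n * m) * a ^ d := by
      rw [mul_assoc, ← hpow, hsub]; ring
    exact Nat.eq_of_mul_eq_mul_right (pow_pos ha0 d) h2
  have hdvd1 : n ∣ (n - d) * a ^ (n - d - 1) := ⟨m, hcancel⟩
  have hrw : d * a ^ (n - d - 1) = n * a ^ (n - d - 1) - (n - d) * a ^ (n - d - 1) := by
    rw [← Nat.sub_mul]; congr 1; omega
  rw [hrw]
  exact Nat.dvd_sub (dvd_mul_right n _) hdvd1
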